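/- For a K×K positive definite Hermitian matrix N with diagonal part N₁, the function g₁(x) = log det(xI + N₁) − log det(xI + N) is monotonically nonincreasing for x ≥ 0. -/

import Mathlib

open Matrix ComplexOrder

lemma key_diag_inv (K : ℕ) (M : Matrix (Fin K) (Fin K) ℂ) (hM : M.PosDef) (i : Fin K) :
    (1:ℝ)/(M i i).re ≤ (M⁻¹ i i).re := by
  classical
  have hMinv : M * M⁻¹ = 1 := Matrix.mul_nonsing_inv M hM.det_pos.ne'.isUnit
  have hMinv' : M⁻¹ * M = 1 := Matrix.nonsing_inv_mul M hM.det_pos.ne'.isUnit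
  set e : Fin K → ℂ := Pi.single i 1 with he
  have hse : star e = e := by
    simp [he, ← Pi.single_star]
  have hrpos : 0 < (M i i).re := by
    have hr : (M i i).re = (dotProduct (star e) (M *ᵥ e)).re := by
      simp [hse, he, mulVec_single, single_dotProduct]
    rw [hr]
    exact hM.re_dotProduct_pos (fun h => by simpa [he] using congrFun h i)
  set r : ℝ := (M i i).re with hrdef
  set t : ℂ := ((1/r : ℝ) : ℂ) with ht
  set w : Fin K → ℂ := t • e - M⁻¹ *ᵥ e with hw
  have h0 : (0:ℂ) ≤ dotProduct (star w) (M *ᵥ w) := hM.posSemidef.dotProduct_mulVec_nonneg w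
  have hMw : M *ᵥ w = t • (M *ᵥ e) - e := by
    rw [hw, mulVec_sub, mulVec_smul, mulVec_mulVec, hMinv, one_mulVec]
  have hherm : (M⁻¹).conjTranspose = M⁻¹ := hM.inv.isHermitian
  have hstarw : star w = t • e - star (M⁻¹ *ᵥ e) := by
    rw [hw, star_sub, star_smul, hse]
    congr 1
    rw [ht, RCLike.star_def, Complex.conj_ofReal]
  have hq : dotProduct (star w) (M *ᵥ w)
      = t * t * (M i i) - t - t + M⁻¹ i i := by
    rw [hstarw, hMw]
    rw [sub_dotProduct, dotProduct_sub, dotProduct_sub]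
    have h1 : dotProduct (t • e) (t • (M *ᵥ e)) = t * t * M i i := by
      rw [dotProduct_smul, smul_dotProduct]
      simp [he, single_dotProduct, mulVec_single, smul_eq_mul]; ring
    have h2 : dotProduct (t • e) e = t := by
      simp [he, smul_dotProduct, single_dotProduct]
    have h3 : dotProduct (star (M⁻¹ *ᵥ e)) (t • (M *ᵥ e)) = t := by
      rw [star_mulVec, dotProduct_smul, ← dotProduct_mulVec, hherm,
        mulVec_mulVec, hMinv', one_mulVec, hse]
      simp [he, single_dotProduct]
    have h4 : dotProduct (star (M⁻¹ *ᵥ e)) e = M⁻¹ i i := by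
      rw [star_mulVec, ← dotProduct_mulVec, hherm, hse]
      simp [he, single_dotProduct, mulVec_single]
    rw [h1, h2, h3, h4]; ring
  have hre : 0 ≤ (1/r) * (1/r) * r - 1/r - 1/r + (M⁻¹ i i).re := by
    have := (Complex.nonneg_iff.mp h0).1
    rw [hq] at this
    simpa [ht, hrdef] using this
  have : 0 ≤ - (1/r) + (M⁻¹ i i).re := by
    have hrr : (1/r) * (1/r) * r = 1/r := by field_simp
    linarith [hre, hrr]
  linarith

section
variable {K : ℕ} {N : Matrix (Fin K) (Fin K) ℂ} (hN : N.PosDef)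

lemma specM (x : ℝ) :
    (x:ℂ) • (1 : Matrix (Fin K) (Fin K) ℂ) + N =
      (hN.isHermitian.eigenvectorUnitary : Matrix (Fin K) (Fin K) ℂ) *
        diagonal (fun i => ((x + hN.isHermitian.eigenvalues i : ℝ) : ℂ)) *
        star (hN.isHermitian.eigenvectorUnitary : Matrix (Fin K) (Fin K) ℂ) := by
  set U : Matrix (Fin K) (Fin K) ℂ := (hN.isHermitian.eigenvectorUnitary : Matrix (Fin K) (Fin K) ℂ)
  have hU : U * star U = 1 := Matrix.mem_unitaryGroup_iff.mp hN.isHermitian.eigenvectorUnitary.2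
  have hd : (diagonal (fun i => ((x + hN.isHermitian.eigenvalues i : ℝ) : ℂ)))
      = (x:ℂ) • 1 + diagonal (RCLike.ofReal ∘ hN.isHermitian.eigenvalues) := by
    rw [smul_one_eq_diagonal, diagonal_add]
    ext i
    push_cast
    rfl
  rw [hd, mul_add, add_mul, mul_smul_comm, smul_mul_assoc, mul_one, hU]
  exact congrArg _ hN.isHermitian.spectral_theorem

lemma detM (x : ℝ) :
    ((x:ℂ) • (1 : Matrix (Fin K) (Fin K) ℂ) + N).det
      = ((∏ i, (x + hN.isHermitian.eigenvalues i) : ℝ) : ℂ) := by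
  set U : Matrix (Fin K) (Fin K) ℂ := (hN.isHermitian.eigenvectorUnitary : Matrix (Fin K) (Fin K) ℂ)
  have hU : U * star U = 1 := Matrix.mem_unitaryGroup_iff.mp hN.isHermitian.eigenvectorUnitary.2
  rw [specM hN x, det_mul, det_mul, mul_comm (U.det), mul_assoc, ← det_mul, hU, det_one, mul_one,
    det_diagonal]
  push_cast
  rfl

lemma invM (x : ℝ) (hx : 0 ≤ x) :
    ((x:ℂ) • (1 : Matrix (Fin K) (Fin K) ℂ) + N)⁻¹
      = (hN.isHermitian.eigenvectorUnitary : Matrix (Fin K) (Fin K) ℂ) *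
        diagonal (fun i => (((x + hN.isHermitian.eigenvalues i : ℝ) : ℂ))⁻¹) *
        star (hN.isHermitian.eigenvectorUnitary : Matrix (Fin K) (Fin K) ℂ) := by
  set U : Matrix (Fin K) (Fin K) ℂ := (hN.isHermitian.eigenvectorUnitary : Matrix (Fin K) (Fin K) ℂ)
  have hU : U * star U = 1 := Matrix.mem_unitaryGroup_iff.mp hN.isHermitian.eigenvectorUnitary.2
  have hU' : star U * U = 1 := Matrix.mem_unitaryGroup_iff'.mp hN.isHermitian.eigenvectorUnitary.2
  apply inv_eq_right_inv
  rw [specM hN x]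
  have hDD : diagonal (fun i => ((x + hN.isHermitian.eigenvalues i : ℝ) : ℂ)) *
      diagonal (fun i => (((x + hN.isHermitian.eigenvalues i : ℝ) : ℂ))⁻¹) = 1 := by
    rw [diagonal_mul_diagonal]
    have : ∀ i, ((x + hN.isHermitian.eigenvalues i : ℝ) : ℂ) ≠ 0 := by
      intro i
      have := hN.eigenvalues_pos i
      simp only [ne_eq, Complex.ofReal_eq_zero]
      positivity
    have h2 : (fun i => ((x + hN.isHermitian.eigenvalues i : ℝ) : ℂ) *
        (((x + hN.isHermitian.eigenvalues i : ℝ) : ℂ))⁻¹) = fun _ => (1:ℂ) :=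
      funext fun i => mul_inv_cancel₀ (this i)
    rw [h2, diagonal_one]
  simp only [mul_assoc]
  rw [← mul_assoc (star U) U, hU', one_mul,
    ← mul_assoc (diagonal fun i => ((x + hN.isHermitian.eigenvalues i : ℝ) : ℂ)), hDD, one_mul, hU]

lemma traceInvM (x : ℝ) (hx : 0 ≤ x) :
    (((x:ℂ) • (1 : Matrix (Fin K) (Fin K) ℂ) + N)⁻¹).trace.re
      = ∑ i, (x + hN.isHermitian.eigenvalues i)⁻¹ := by
  have hU' : star (hN.isHermitian.eigenvectorUnitary : Matrix (Fin K) (Fin K) ℂ) *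
      (hN.isHermitian.eigenvectorUnitary : Matrix (Fin K) (Fin K) ℂ) = 1 :=
    Matrix.mem_unitaryGroup_iff'.mp hN.isHermitian.eigenvectorUnitary.2
  rw [invM hN x hx, trace_mul_cycle, hU', one_mul, trace_diagonal]
  have : (∑ i, (((x + hN.isHermitian.eigenvalues i : ℝ) : ℂ))⁻¹)
      = ((∑ i, (x + hN.isHermitian.eigenvalues i)⁻¹ : ℝ) : ℂ) := by
    push_cast
    rfl
  rw [this, Complex.ofReal_re]

end

section
variable {K : ℕ} {N : Matrix (Fin K) (Fin K) ℂ} (hN : N.PosDef)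
include hN

lemma diag_re_pos (i : Fin K) : 0 < (N i i).re := by
  classical
  set e : Fin K → ℂ := Pi.single i 1 with he
  have hse : star e = e := by simp [he, ← Pi.single_star]
  have hr : (N i i).re = (dotProduct (star e) (N *ᵥ e)).re := by
    simp [hse, he, mulVec_single, single_dotProduct]
  rw [hr]
  exact hN.re_dotProduct_pos (fun h => by simpa [he] using congrFun h i)

lemma detDiag (x : ℝ) :
    ((x:ℂ) • (1 : Matrix (Fin K) (Fin K) ℂ) + diagonal (fun i => N i i)).det
      = ((∏ i, (x + (N i i).re) : ℝ) : ℂ) := by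
  rw [smul_one_eq_diagonal, diagonal_add, det_diagonal]
  push_cast
  congr 1
  funext i
  congr 1
  exact (Complex.conj_eq_iff_re.mp (hN.isHermitian.apply i i)).symm

lemma posdefM (x : ℝ) (hx : 0 ≤ x) :
    ((x:ℂ) • (1 : Matrix (Fin K) (Fin K) ℂ) + N).PosDef := by
  refine Matrix.PosDef.posSemidef_add ?_ hN
  rw [smul_one_eq_diagonal]
  exact Matrix.PosSemidef.diagonal fun _ => Complex.zero_le_real.mpr hx

lemma sum_ineq (x : ℝ) (hx : 0 ≤ x) :
    ∑ i, (x + (N i i).re)⁻¹ ≤ ∑ i, (x + hN.isHermitian.eigenvalues i)⁻¹ := by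
  set M : Matrix (Fin K) (Fin K) ℂ := (x:ℂ) • (1 : Matrix (Fin K) (Fin K) ℂ) + N with hM
  have hMpd : M.PosDef := posdefM hN x hx
  have hMe : ∀ i, (M i i).re = x + (N i i).re := by
    intro i
    rw [hM]
    simp [Matrix.add_apply, Matrix.smul_apply, Matrix.one_apply]
  have h1 : ∀ i, (x + (N i i).re)⁻¹ ≤ (M⁻¹ i i).re := by
    intro i
    have := key_diag_inv K M hMpd i
    rw [hMe i] at this
    rw [inv_eq_one_div]
    exact this
  calc ∑ i, (x + (N i i).re)⁻¹ ≤ ∑ i, (M⁻¹ i i).re := Finset.sum_le_sum fun i _ => h1 i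
    _ = (M⁻¹.trace).re := by rw [Matrix.trace, Complex.re_sum]; rfl
    _ = ∑ i, (x + hN.isHermitian.eigenvalues i)⁻¹ := traceInvM hN x hx
end

section
variable {K : ℕ} {N : Matrix (Fin K) (Fin K) ℂ} (hN : N.PosDef)
include hN

lemma hasDerivF (x : ℝ) (hx : 0 < x) :
    HasDerivAt (fun y : ℝ => (∑ i, Real.log (y + (N i i).re))
        - ∑ i, Real.log (y + hN.isHermitian.eigenvalues i))
      ((∑ i, (x + (N i i).re)⁻¹) - ∑ i, (x + hN.isHermitian.eigenvalues i)⁻¹) x := by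
  have h1 : ∀ c : ℝ, 0 < c → HasDerivAt (fun y : ℝ => Real.log (y + c)) (x + c)⁻¹ x := by
    intro c hc
    have h := ((hasDerivAt_id x).add_const c).log (by positivity)
    simpa [one_div] using h
  exact (HasDerivAt.fun_sum fun i _ => h1 _ (diag_re_pos hN i)).sub
    (HasDerivAt.fun_sum fun i _ => h1 _ (hN.eigenvalues_pos i))

lemma antitoneF :
    AntitoneOn (fun y : ℝ => (∑ i, Real.log (y + (N i i).re))
        - ∑ i, Real.log (y + hN.isHermitian.eigenvalues i)) (Set.Ici 0) := by
  apply antitoneOn_of_deriv_nonpos (convex_Ici 0)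
  · apply ContinuousOn.sub <;>
    · apply continuousOn_finset_sum
      intro i _
      apply ContinuousOn.log ((continuous_id.add continuous_const).continuousOn)
      intro y hy
      have hy0 : (0:ℝ) ≤ y := hy
      have := diag_re_pos hN i
      have := hN.eigenvalues_pos i
      simp only [Pi.add_apply, id_eq]
      positivity
  · rw [interior_Ici]
    intro y hy
    exact ((hasDerivF hN y hy).differentiableAt).differentiableWithinAt
  · rw [interior_Ici]
    intro y hy
    rw [(hasDerivF hN y hy).deriv]
    exact sub_nonpos.mpr (sum_ineq hN y hy.le)

end

/-- For a K×K positive definite Hermitian complex matrix `N` with diagonal part `N₁`,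
the function `g₁(x) = log det(xI + N₁) − log det(xI + N)` is monotonically
nonincreasing on `[0, ∞)` (determinants taken via their real parts, which are the
actual positive real values). -/
theorem stmt3 (K : ℕ) (N : Matrix (Fin K) (Fin K) ℂ) (hN : N.PosDef) :
    AntitoneOn
      (fun x : ℝ =>
        Real.log (((x : ℂ) • (1 : Matrix (Fin K) (Fin K) ℂ) +
            Matrix.diagonal (fun i => N i i)).det.re) -
          Real.log (((x : ℂ) • (1 : Matrix (Fin K) (Fin K) ℂ) + N).det.re))
      (Set.Ici 0) := by
  have heq : ∀ x ∈ Set.Ici (0:ℝ),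
      (Real.log (((x : ℂ) • (1 : Matrix (Fin K) (Fin K) ℂ) +
            Matrix.diagonal (fun i => N i i)).det.re) -
          Real.log (((x : ℂ) • (1 : Matrix (Fin K) (Fin K) ℂ) + N).det.re))
      = (∑ i, Real.log (x + (N i i).re))
        - ∑ i, Real.log (x + hN.isHermitian.eigenvalues i) := by
    intro x hx
    have hx0 : (0:ℝ) ≤ x := hx
    have e1 : (((x : ℂ) • (1 : Matrix (Fin K) (Fin K) ℂ) +
        Matrix.diagonal (fun i => N i i)).det).re = ∏ i, (x + (N i i).re) := by
      rw [detDiag hN x, Complex.ofReal_re]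
    have e2 : (((x : ℂ) • (1 : Matrix (Fin K) (Fin K) ℂ) + N).det).re
        = ∏ i, (x + hN.isHermitian.eigenvalues i) := by
      rw [detM hN x, Complex.ofReal_re]
    rw [e1, e2, Real.log_prod (fun i _ => by have := diag_re_pos hN i; positivity),
      Real.log_prod (fun i _ => by have := hN.eigenvalues_pos i; positivity)]
  intro a ha b hb hab
  simp only
  rw [heq a ha, heq b hb]
  exact antitoneF hN ha hb hab
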